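/- Let φ : [0,2] → ℝ be twice continuously differentiable and let k ∈ (0,2) be such that φ''(t) < 0 for t ∈ [0,k) and φ''(t) > 0 for t ∈ (k,2]. Let β ∈ (0,1) satisfy φ(2β) − φ(β) = β·φ'(β). Define Γ(x) = β − x for x ∈ [0,β) and Γ(x) = x for x ∈ [β,1], and define f : [0,1] → ℝ by f(x) = x·φ'(β) for x ∈ [0,β) and f(x) = (1/2)(φ(2x) − φ(2β)) + β·φ'(β) for x ∈ [β,1]. Then for all x, ξ ∈ [0,1], φ(ξ + Γ(x)) − φ(x + Γ(x)) ≤ f(ξ) − f(x). -/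

import Mathlib

open Set

theorem stmt16 (φ φ' φ'' : ℝ → ℝ)
    (hd1 : ∀ t ∈ Icc (0:ℝ) 2, HasDerivWithinAt φ (φ' t) (Icc 0 2) t)
    (hd2 : ∀ t ∈ Icc (0:ℝ) 2, HasDerivWithinAt φ' (φ'' t) (Icc 0 2) t)
    (hc : ContinuousOn φ'' (Icc (0:ℝ) 2))
    (k : ℝ) (hk : k ∈ Ioo (0:ℝ) 2)
    (hconc : ∀ t ∈ Ico (0:ℝ) k, φ'' t < 0)
    (hconv : ∀ t ∈ Ioc k 2, 0 < φ'' t)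
    (β : ℝ) (hβ : β ∈ Ioo (0:ℝ) 1)
    (hβeq : φ (2 * β) - φ β = β * φ' β)
    (Γ f : ℝ → ℝ)
    (hΓ1 : ∀ x, 0 ≤ x → x < β → Γ x = β - x)
    (hΓ2 : ∀ x, β ≤ x → x ≤ 1 → Γ x = x)
    (hf1 : ∀ x, 0 ≤ x → x < β → f x = x * φ' β)
    (hf2 : ∀ x, β ≤ x → x ≤ 1 → f x = (1 / 2) * (φ (2 * x) - φ (2 * β)) + β * φ' β)
    : ∀ x ∈ Icc (0:ℝ) 1, ∀ ξ ∈ Icc (0:ℝ) 1,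
      φ (ξ + Γ x) - φ (x + Γ x) ≤ f ξ - f x := by
  obtain ⟨hβ0, hβ1⟩ := hβ
  obtain ⟨hk0, hk2⟩ := hk
  have hφc : ContinuousOn φ (Icc 0 2) := fun t ht => (hd1 t ht).continuousWithinAt
  have hφ'c : ContinuousOn φ' (Icc 0 2) := fun t ht => (hd2 t ht).continuousWithinAt
  have hd1at : ∀ t ∈ Ioo (0:ℝ) 2, HasDerivAt φ (φ' t) t := fun t ht =>
    (hd1 t (Ioo_subset_Icc_self ht)).hasDerivAt (Icc_mem_nhds ht.1 ht.2)
  have hd2at : ∀ t ∈ Ioo (0:ℝ) 2, HasDerivAt φ' (φ'' t) t := fun t ht =>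
    (hd2 t (Ioo_subset_Icc_self ht)).hasDerivAt (Icc_mem_nhds ht.1 ht.2)
  have anti : StrictAntiOn φ' (Icc 0 k) := by
    apply strictAntiOn_of_deriv_neg (convex_Icc _ _)
      (hφ'c.mono (Icc_subset_Icc le_rfl hk2.le))
    intro t ht
    rw [interior_Icc] at ht
    rw [(hd2at t ⟨ht.1, lt_trans ht.2 hk2⟩).deriv]
    exact hconc t ⟨ht.1.le, ht.2⟩
  have mono : StrictMonoOn φ' (Icc k 2) := by
    apply strictMonoOn_of_deriv_pos (convex_Icc _ _)
      (hφ'c.mono (Icc_subset_Icc hk0.le le_rfl))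
    intro t ht
    rw [interior_Icc] at ht
    rw [(hd2at t ⟨lt_trans hk0 ht.1, ht.2⟩).deriv]
    exact hconv t ⟨ht.1, ht.2.le⟩
  -- the mean value point c ∈ (β, 2β) with φ' c = φ' β
  obtain ⟨c, hc1, hc2⟩ := exists_hasDerivAt_eq_slope φ φ' (by linarith : β < 2*β)
    (hφc.mono (Icc_subset_Icc (by linarith) (by linarith)))
    (fun t ht => hd1at t ⟨by linarith [ht.1], by linarith [ht.2]⟩)
  have hcβ : φ' c = φ' β := by
    rw [hc2, show 2*β - β = β by ring, hβeq]
    field_simp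
  obtain ⟨hβc, hc2β⟩ := hc1
  have hkc : k < c := by
    by_contra h
    push_neg at h
    have := anti ⟨hβ0.le, by linarith⟩ ⟨by linarith, h⟩ hβc
    linarith [this, hcβ.le, hcβ.ge]
  have hβk : β < k := by
    by_contra h
    push_neg at h
    have := mono ⟨h, by linarith⟩ ⟨hkc.le, by linarith⟩ hβc
    linarith [this, hcβ.le, hcβ.ge]
  have hk2β : k < 2*β := lt_trans hkc hc2β
  -- G t = φ t - tangent line at β
  set G : ℝ → ℝ := fun t => φ t - φ β - (t - β) * φ' β with hGdef
  have hGexp : ∀ t, G t = φ t - φ β - (t - β) * φ' β := fun t => by rw [hGdef]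
  clear_value G
  have hGc : ContinuousOn G (Icc 0 2) := by
    rw [hGdef]
    exact (hφc.sub continuousOn_const).sub (Continuous.continuousOn ((continuous_id.sub continuous_const).mul continuous_const))
  have hGat : ∀ t ∈ Ioo (0:ℝ) 2, HasDerivAt G (φ' t - φ' β) t := by
    intro t ht
    rw [hGdef]
    have h1 : HasDerivAt (fun s : ℝ => φ s - φ β - (s - β) * φ' β)
        (φ' t - 1 * φ' β) t :=
      ((hd1at t ht).sub_const (φ β)).sub
        (((hasDerivAt_id t).sub_const β).mul_const (φ' β))
    simpa using h1
  have hGβ : G β = 0 := by rw [hGexp]; ring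
  have hG2β : G (2*β) = 0 := by
    rw [hGexp, show 2*β - β = β by ring]
    linarith [hβeq]
  -- monotonicity pieces of G
  have hmono1 : StrictMonoOn G (Icc 0 β) := by
    apply strictMonoOn_of_deriv_pos (convex_Icc _ _)
      (hGc.mono (Icc_subset_Icc le_rfl (by linarith)))
    intro t ht
    rw [interior_Icc] at ht
    rw [(hGat t ⟨ht.1, by linarith [ht.2]⟩).deriv]
    have := anti ⟨ht.1.le, by linarith [ht.2]⟩ ⟨hβ0.le, hβk.le⟩ ht.2
    linarith
  have hanti2 : StrictAntiOn G (Icc β c) := by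
    apply strictAntiOn_of_deriv_neg (convex_Icc _ _)
      (hGc.mono (Icc_subset_Icc (by linarith) (by linarith)))
    intro t ht
    rw [interior_Icc] at ht
    rw [(hGat t ⟨by linarith [ht.1], by linarith [ht.2]⟩).deriv]
    rcases le_or_gt t k with h | h
    · have := anti ⟨hβ0.le, hβk.le⟩ ⟨by linarith [ht.1], h⟩ ht.1
      linarith
    · have := mono ⟨h.le, by linarith [ht.2]⟩ ⟨hkc.le, by linarith⟩ ht.2
      linarith [hcβ]
  have hmono3 : StrictMonoOn G (Icc c 2) := by
    apply strictMonoOn_of_deriv_pos (convex_Icc _ _)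
      (hGc.mono (Icc_subset_Icc (by linarith) le_rfl))
    intro t ht
    rw [interior_Icc] at ht
    rw [(hGat t ⟨by linarith [ht.1], ht.2⟩).deriv]
    have := mono ⟨hkc.le, by linarith⟩ ⟨by linarith [ht.1], ht.2.le⟩ ht.1
    linarith [hcβ]
  have hGle : ∀ t, 0 ≤ t → t ≤ 2*β → G t ≤ 0 := by
    intro t ht0 ht2
    rcases le_or_gt t β with h | h
    · calc G t ≤ G β := hmono1.monotoneOn ⟨ht0, h⟩ ⟨hβ0.le, le_rfl⟩ h
        _ = 0 := hGβ
    · rcases le_or_gt t c with h2 | h2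
      · calc G t ≤ G β := by
              rcases eq_or_lt_of_le h.le with he | hlt
              · rw [he]
              · exact le_of_lt (hanti2 ⟨le_rfl, by linarith⟩ ⟨h.le, h2⟩ h)
          _ = 0 := hGβ
      · calc G t ≤ G (2*β) :=
            hmono3.monotoneOn ⟨h2.le, by linarith⟩ ⟨hc2β.le, by linarith⟩ ht2
          _ = 0 := hG2β
  have hGge : ∀ t, 2*β ≤ t → t ≤ 2 → 0 ≤ G t := by
    intro t ht0 ht2
    calc (0:ℝ) = G (2*β) := hG2β.symm
      _ ≤ G t := hmono3.monotoneOn ⟨hc2β.le, by linarith⟩ ⟨by linarith, ht2⟩ ht0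
  -- convexity of G on [2β, 2]
  have hGconv : ConvexOn ℝ (Icc (2*β) 2) G := by
    have : StrictConvexOn ℝ (Icc (2*β) 2) G := by
      apply StrictMonoOn.strictConvexOn_of_deriv (convex_Icc _ _)
        (hGc.mono (Icc_subset_Icc (by linarith) le_rfl))
      rw [interior_Icc]
      intro s hs t ht hst
      rw [(hGat s ⟨by linarith [hs.1], hs.2⟩).deriv,
        (hGat t ⟨by linarith [ht.1], ht.2⟩).deriv]
      have := mono ⟨by linarith [hs.1], by linarith [hs.2]⟩
        ⟨by linarith [ht.1], ht.2.le⟩ hst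
      linarith
    exact this.convexOn
  -- key lemma: G (y + s) ≤ (1/2) * G (2 y) for y ∈ [β,1], s ∈ [0,β]
  have hKey : ∀ y s, β ≤ y → y ≤ 1 → 0 ≤ s → s ≤ β → G (y + s) ≤ (1/2) * G (2*y) := by
    intro y s hy1 hy2 hs1 hs2
    have hG2y : 0 ≤ G (2*y) := hGge (2*y) (by linarith) (by linarith)
    rcases le_or_gt (y + s) (2*β) with h | h
    · have := hGle (y + s) (by linarith) h
      linarith
    · have hyβ : β < y := by
        by_contra hyb
        push_neg at hyb
        linarith
      set lam : ℝ := (y + s - 2*β) / (2*y - 2*β) with hlam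
      have hden : 0 < 2*y - 2*β := by linarith
      have hden' : 2*y - 2*β ≠ 0 := ne_of_gt hden
      have hlam0 : 0 ≤ lam := div_nonneg (by linarith) (by linarith)
      have hlam12 : lam ≤ 1/2 := by
        rw [hlam, div_le_iff₀ hden]
        linarith
      have hcomb := hGconv.2 (show (2*β) ∈ Icc (2*β) 2 from ⟨le_rfl, by linarith⟩)
        (show (2*y) ∈ Icc (2*β) 2 from ⟨by linarith, by linarith⟩)
        (show (0:ℝ) ≤ 1 - lam by linarith) hlam0 (by ring)
      simp only [smul_eq_mul] at hcomb
      have harg : (1 - lam) * (2*β) + lam * (2*y) = y + s := by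
        have hm : lam * (2*y - 2*β) = y + s - 2*β := by rw [hlam]; exact div_mul_cancel₀ _ hden'
        linear_combination hm
      rw [harg, hG2β] at hcomb
      have : lam * G (2*y) ≤ (1/2) * G (2*y) :=
        mul_le_mul_of_nonneg_right hlam12 hG2y
      calc G (y+s) ≤ (1 - lam) * 0 + lam * G (2*y) := hcomb
        _ = lam * G (2*y) := by ring
        _ ≤ (1/2) * G (2*y) := this
  -- midpoint lemma
  have hMid : ∀ a b, β ≤ a → a ≤ 1 → β ≤ b → b ≤ 1 →
      G (a + b) ≤ (1/2) * G (2*a) + (1/2) * G (2*b) := by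
    intro a b ha1 ha2 hb1 hb2
    have hcomb := hGconv.2 (show (2*a) ∈ Icc (2*β) 2 from ⟨by linarith, by linarith⟩)
      (show (2*b) ∈ Icc (2*β) 2 from ⟨by linarith, by linarith⟩)
      (show (0:ℝ) ≤ 1/2 by norm_num) (show (0:ℝ) ≤ 1/2 by norm_num)
      (show (1:ℝ)/2 + 1/2 = 1 by norm_num)
    simp only [smul_eq_mul] at hcomb
    have harg : (1:ℝ)/2 * (2*a) + 1/2 * (2*b) = a + b := by ring
    rw [harg] at hcomb
    exact hcomb
  -- main proof
  intro x hx ξ hξ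
  obtain ⟨hx0, hx1⟩ := hx
  obtain ⟨hξ0, hξ1⟩ := hξ
  rcases lt_or_ge x β with hxβ | hxβ
  · rw [hΓ1 x hx0 hxβ, hf1 x hx0 hxβ, show x + (β - x) = β by ring]
    rcases lt_or_ge ξ β with hξβ | hξβ
    · rw [hf1 ξ hξ0 hξβ]
      have h := hGle (ξ + (β - x)) (by linarith) (by linarith)
      rw [hGexp] at h
      linarith
    · rw [hf2 ξ hξβ hξ1]
      have h := hKey ξ (β - x) hξβ hξ1 (by linarith) (by linarith)
      rw [hGexp, hGexp] at h
      linarith [hβeq]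
  · rw [hΓ2 x hxβ hx1, hf2 x hxβ hx1, show x + x = 2*x by ring,
      show ξ + x = x + ξ by ring]
    rcases lt_or_ge ξ β with hξβ | hξβ
    · rw [hf1 ξ hξ0 hξβ]
      have h := hKey x ξ hxβ hx1 hξ0 (by linarith)
      rw [hGexp, hGexp] at h
      linarith [hβeq]
    · rw [hf2 ξ hξβ hξ1]
      have h := hMid x ξ hxβ hx1 hξβ hξ1
      rw [hGexp, hGexp, hGexp] at h
      linarith
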